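/- Let C ∈ Mat_N(R) and a_1,…,a_n ∈ Mat_N(R) satisfy the Lax-type equations ∂_{s_j} C = a_j · C − C · a_j for every j ∈ Fin n (where ∂_{s_j} = pderiv j is applied to each entry of C), and suppose that C vanishes at s = 0 (the constant term of every entry of C is zero). Then every entry of C lies in the ideal of R generated by s_1^p, …, s_n^p. -/

import Mathlib

open MvPolynomial Matrix

lemma coeff_pderiv' {σ R : Type*} [CommSemiring R] [DecidableEq σ] (j : σ)
    (f : MvPolynomial σ R) (μ : σ →₀ ℕ) :
    coeff μ (pderiv j f) = (μ j + 1) * coeff (μ + Finsupp.single j 1) f := by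
  induction f using MvPolynomial.induction_on' with
  | monomial s a =>
    rw [pderiv_monomial, coeff_monomial, coeff_monomial]
    by_cases h : s = μ + Finsupp.single j 1
    · subst h
      rw [if_pos, if_pos rfl]
      · simp [mul_comm]
      · simp
    · rw [if_neg h]
      by_cases h2 : s - Finsupp.single j 1 = μ
      · rw [if_pos h2]
        have hsj : s j = 0 := by
          by_contra hsj
          apply h
          rw [← h2, tsub_add_cancel_of_le]
          exact Finsupp.single_le_iff.2 (Nat.one_le_iff_ne_zero.2 hsj)
        simp [hsj]
      · rw [if_neg h2, mul_zero]
  | add f g hf hg => simp [hf, hg, mul_add]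

theorem entries_mem_span_pow_p_of_lax
    {p : ℕ} [Fact p.Prime] {F : Type} [Field F] [CharP F p] {N n : ℕ} (hn : 1 ≤ n)
    (C : Matrix (Fin N) (Fin N) (MvPolynomial (Fin n) F))
    (a : Fin n → Matrix (Fin N) (Fin N) (MvPolynomial (Fin n) F))
    (hLax : ∀ j : Fin n, C.map (⇑(pderiv j)) = a j * C - C * a j)
    (hzero : ∀ i i' : Fin N, constantCoeff (C i i') = 0) :
    ∀ i i' : Fin N, C i i' ∈
      Ideal.span (Set.range fun j : Fin n => (X j : MvPolynomial (Fin n) F) ^ p) := by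
  have key : ∀ (d : ℕ) (m : Fin n →₀ ℕ), (∑ j, m j) = d → (∀ j, m j < p) →
      ∀ i i' : Fin N, coeff m (C i i') = 0 := by
    intro d
    induction d using Nat.strong_induction_on with
    | _ d IH =>
      intro m hd hmp i i'
      rcases Nat.eq_zero_or_pos d with hd0 | hdpos
      · -- m = 0, use hzero
        have hm0 : m = 0 := by
          ext j
          have := (Finset.sum_eq_zero_iff.1 (hd.trans hd0)) j (Finset.mem_univ j)
          simpa using this
        subst hm0
        simpa [← constantCoeff_eq] using hzero i i'
      · -- pick j with m j ≠ 0
        have hex : ∃ j, m j ≠ 0 := by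
          by_contra h
          push_neg at h
          simp [h] at hd
          omega
        obtain ⟨j, hj⟩ := hex
        set μ : Fin n →₀ ℕ := m - Finsupp.single j 1 with hμdef
        have hle : Finsupp.single j 1 ≤ m := Finsupp.single_le_iff.2 (Nat.one_le_iff_ne_zero.2 hj)
        have hμm : μ + Finsupp.single j 1 = m := tsub_add_cancel_of_le hle
        have hμsum : (∑ j', μ j') + 1 = d := by
          have : (∑ j', μ j') + (∑ j', Finsupp.single j 1 j') = d := by
            rw [← Finset.sum_add_distrib]
            simp only [← Finsupp.add_apply, hμm, hd]
          simpa [Finsupp.single_apply] using this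
        have hμle : ∀ j', μ j' ≤ m j' := fun j' => by
          rw [← hμm]; simp
        have hEq := congrFun (congrFun (hLax j) i) i'
        rw [Matrix.map_apply, Matrix.sub_apply, Matrix.mul_apply, Matrix.mul_apply] at hEq
        have hC := congrArg (coeff μ) hEq
        rw [coeff_pderiv', hμm] at hC
        have hz1 : coeff μ (∑ k, a j i k * C k i') = 0 := by
          rw [coeff_sum]
          refine Finset.sum_eq_zero fun k _ => ?_
          rw [coeff_mul]
          refine Finset.sum_eq_zero fun x hx => ?_
          have hxμ : x.1 + x.2 = μ := Finset.HasAntidiagonal.mem_antidiagonal.1 hx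
          have hx2le : ∀ j', x.2 j' ≤ μ j' := fun j' => by
            rw [← hxμ]; simp
          have : coeff x.2 (C k i') = 0 := by
            refine IH (∑ j', x.2 j') ?_ x.2 rfl (fun j' => lt_of_le_of_lt
              (le_trans (hx2le j') (hμle j')) (hmp j')) k i'
            calc (∑ j', x.2 j') ≤ ∑ j', μ j' := Finset.sum_le_sum fun j' _ => hx2le j'
              _ < d := by omega
          rw [this, mul_zero]
        have hz2 : coeff μ (∑ k, C i k * a j k i') = 0 := by
          rw [coeff_sum]
          refine Finset.sum_eq_zero fun k _ => ?_
          rw [coeff_mul]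
          refine Finset.sum_eq_zero fun x hx => ?_
          have hxμ : x.1 + x.2 = μ := Finset.HasAntidiagonal.mem_antidiagonal.1 hx
          have hx1le : ∀ j', x.1 j' ≤ μ j' := fun j' => by
            rw [← hxμ]; simp
          have : coeff x.1 (C i k) = 0 := by
            refine IH (∑ j', x.1 j') ?_ x.1 rfl (fun j' => lt_of_le_of_lt
              (le_trans (hx1le j') (hμle j')) (hmp j')) i k
            calc (∑ j', x.1 j') ≤ ∑ j', μ j' := Finset.sum_le_sum fun j' _ => hx1le j'
              _ < d := by omega
          rw [this, zero_mul]
        rw [MvPolynomial.coeff_sub, hz1, hz2, sub_zero] at hC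
        have hμj1 : μ j + 1 = m j := by
          have := congrArg (fun f => f j) hμm
          simpa using this
        have hcast : ((μ j : F) + 1) ≠ 0 := by
          have : ((μ j : F) + 1) = ((m j : ℕ) : F) := by
            rw [← hμj1]; push_cast; ring
          rw [this, Ne, CharP.cast_eq_zero_iff F p]
          exact Nat.not_dvd_of_pos_of_lt (Nat.pos_of_ne_zero hj) (hmp j)
        exact (mul_eq_zero.1 hC).resolve_left hcast
  intro i i'
  rw [as_sum (C i i')]
  apply Ideal.sum_mem
  intro v hv
  have hcoeff : coeff v (C i i') ≠ 0 := mem_support_iff.1 hv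
  have hexp : ∃ j, p ≤ v j := by
    by_contra h
    push_neg at h
    exact hcoeff (key _ v rfl h i i')
  obtain ⟨j, hj⟩ := hexp
  have hfac : (monomial v) (coeff v (C i i')) =
      (monomial (v - Finsupp.single j p) (coeff v (C i i'))) * (X j) ^ p := by
    rw [X_pow_eq_monomial, monomial_mul, mul_one, tsub_add_cancel_of_le
      (Finsupp.single_le_iff.2 hj)]
  rw [hfac]
  exact Ideal.mul_mem_left _ _ (Ideal.subset_span ⟨j, rfl⟩)
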